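/- Let X ⊆ ℕ and suppose there exist functions D : ℕ → ℕ and A : ℕ → ℕ and constants u, v ∈ ℕ such that: D and A are nondecreasing; D(n) ≥ 1, D(n+1) − D(n) ≤ u and A(n+1) − A(n) ≤ v for all n; and for every n, X repeats on [A(n), A(n)+n] with shift D(n). Then there exists d ≥ 1 such that for every n ∈ ℕ there exists a ∈ ℕ such that X repeats on [a, a+n] with shift d. -/

import Mathlib

/-- `X` repeats on `[a, a+n]` with shift `g`: for every `i ≤ n`,
`a + i ∈ X ↔ a + g + i ∈ X`. -/
def RepeatsOn (X : Set ℕ) (a g n : ℕ) : Prop :=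
  ∀ i ≤ n, (a + i ∈ X ↔ a + g + i ∈ X)

theorem constant_shift_from_bounded_increments (X : Set ℕ) (D A : ℕ → ℕ) (u v : ℕ)
    (hDmono : Monotone D) (hAmono : Monotone A)
    (hD1 : ∀ n : ℕ, 1 ≤ D n)
    (hDu : ∀ n : ℕ, D (n + 1) - D n ≤ u)
    (hAv : ∀ n : ℕ, A (n + 1) - A n ≤ v)
    (hrep : ∀ n : ℕ, RepeatsOn X (A n) (D n) n) :
    ∃ d : ℕ, 1 ≤ d ∧ ∀ n : ℕ, ∃ a : ℕ, RepeatsOn X a d n := by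
  by_cases h : ∀ N : ℕ, ∃ M, N ≤ M ∧ D M < D (M + 1)
  · -- D increases infinitely often; pigeonhole on the increment
    have hS : {M : ℕ | D M < D (M + 1)}.Infinite := by
      rw [Set.infinite_coe_iff.symm]
      rw [Set.infinite_coe_iff]
      intro hfin
      obtain ⟨b, hb⟩ := hfin.bddAbove
      obtain ⟨M, hM1, hM2⟩ := h (b + 1)
      exact absurd (hb hM2) (by omega)
    have hdex : ∃ d ∈ Finset.Icc 1 u, {M : ℕ | D (M + 1) = D M + d}.Infinite := by
      by_contra hc
      push_neg at hc
      have hsub : {M : ℕ | D M < D (M + 1)} ⊆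
          ⋃ d ∈ Finset.Icc 1 u, {M : ℕ | D (M + 1) = D M + d} := by
        intro M hM
        simp only [Set.mem_setOf_eq] at hM
        have hu := hDu M
        simp only [Set.mem_iUnion, Set.mem_setOf_eq, Finset.mem_Icc]
        exact ⟨D (M + 1) - D M, ⟨by omega, by omega⟩, by omega⟩
      exact hS (((Finset.Icc 1 u).finite_toSet.biUnion
        (fun d hd => hc d hd)).subset hsub)
    obtain ⟨d, hd, hinf⟩ := hdex
    simp only [Finset.mem_Icc] at hd
    refine ⟨d, hd.1, fun n => ?_⟩
    obtain ⟨M, hM, hMgt⟩ := hinf.exists_gt (n + u + v)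
    simp only [Set.mem_setOf_eq] at hM
    refine ⟨A (M + 1), fun i hi => ?_⟩
    have hA1 : A M ≤ A (M + 1) := hAmono (Nat.le_succ M)
    have hA2 : A (M + 1) - A M ≤ v := hAv M
    have h1 := hrep (M + 1) i (by omega)
    set j := A (M + 1) + d + i - A M with hjdef
    have hj : j ≤ M := by omega
    have h2 := hrep M j hj
    have e1 : A M + j = A (M + 1) + d + i := by omega
    have e2 : A M + D M + j = A (M + 1) + D (M + 1) + i := by omega
    rw [e1, e2] at h2
    exact h1.trans h2.symm
  · -- D is eventually constant
    push_neg at h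
    obtain ⟨N, hN⟩ := h
    have hconst : ∀ M, N ≤ M → D M = D N := by
      intro M hM
      induction M, hM using Nat.le_induction with
      | base => rfl
      | succ M hM ih =>
        have h1 := hN M hM
        have h2 := hDmono (show M ≤ M + 1 by omega)
        omega
    refine ⟨D N, hD1 N, fun n => ?_⟩
    refine ⟨A (max n N), fun i hi => ?_⟩
    have h1 := hrep (max n N) i (le_trans hi (le_max_left n N))
    rwa [hconst (max n N) (le_max_right n N)] at h1
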